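/- Let fL, fU : ℝⁿ → ℝ be convex with fL ≤ fU pointwise, X ⊆ ℝⁿ convex, and 0 ≤ εL ≤ εU. A point x* ∈ X is a weakly E-LU-solution (no x ∈ X with fL(x) < fL(x*) − εU and fU(x) < fU(x*) − εL) if and only if there exist μL ≥ 0, μU ≥ 0 with μL + μU = 1 such that μL·fL(x) + μU·fU(x) ≥ μL·fL(x*) + μU·fU(x*) − μL·εU − μU·εL for all x ∈ X. -/

import Mathlib

private lemma combo_lt {s t a a' b b' : ℝ} (hs : 0 ≤ s) (ht : 0 ≤ t) (hst : s + t = 1)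
    (ha : a < a') (hb : b < b') : s * a + t * b < s * a' + t * b' := by
  rcases hs.eq_or_lt with rfl | hs'
  · have h : t = 1 := by linarith
    subst h; simpa
  · nlinarith [mul_le_mul_of_nonneg_left hb.le ht]

theorem weakly_E_LU_scalarization (n : ℕ) (fL fU : (Fin n → ℝ) → ℝ)
    (hfL : ConvexOn ℝ Set.univ fL) (hfU : ConvexOn ℝ Set.univ fU)
    (hf : ∀ x, fL x ≤ fU x) (X : Set (Fin n → ℝ)) (hX : Convex ℝ X)
    (εL εU : ℝ) (hεL : 0 ≤ εL) (hε : εL ≤ εU) (xs : Fin n → ℝ) (hxs : xs ∈ X) :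
    (¬ ∃ x ∈ X, fL x < fL xs - εU ∧ fU x < fU xs - εL) ↔
    (∃ μL μU : ℝ, 0 ≤ μL ∧ 0 ≤ μU ∧ μL + μU = 1 ∧
      ∀ x ∈ X, μL * fL x + μU * fU x ≥
        μL * fL xs + μU * fU xs - μL * εU - μU * εL) := by
  constructor
  · intro hno
    set C : Set (ℝ × ℝ) :=
      {y | ∃ x ∈ X, fL x - fL xs + εU < y.1 ∧ fU x - fU xs + εL < y.2} with hC
    have hCopen : IsOpen C := by
      have : C = ⋃ x ∈ X,
          (Set.Ioi (fL x - fL xs + εU)) ×ˢ (Set.Ioi (fU x - fU xs + εL)) := by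
        ext y
        simp only [hC, Set.mem_setOf_eq, Set.mem_iUnion, Set.mem_prod, Set.mem_Ioi,
          exists_prop]
      rw [this]
      exact isOpen_biUnion fun x _ => isOpen_Ioi.prod isOpen_Ioi
    have hCconv : Convex ℝ C := by
      rintro ⟨a1, a2⟩ ⟨x, hxX, hx1, hx2⟩ ⟨b1, b2⟩ ⟨z, hzX, hz1, hz2⟩ s t hs ht hst
      refine ⟨s • x + t • z, hX hxX hzX hs ht hst, ?_, ?_⟩
      · have hc := hfL.2 (Set.mem_univ x) (Set.mem_univ z) hs ht hst
        simp only [smul_eq_mul] at hc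
        have hlt : s * fL x + t * fL z < s * (a1 + (fL xs - εU)) + t * (b1 + (fL xs - εU)) :=
          combo_lt hs ht hst (by simp only at hx1; linarith) (by simp only at hz1; linarith)
        show fL (s • x + t • z) - fL xs + εU < (s • ((a1, a2) : ℝ × ℝ) + t • (b1, b2)).1
        have h5 : (s • ((a1, a2) : ℝ × ℝ) + t • (b1, b2)).1 = s * a1 + t * b1 := by simp
        rw [h5]
        have hexp : s * (a1 + (fL xs - εU)) + t * (b1 + (fL xs - εU)) =
            s * a1 + t * b1 + (fL xs - εU) * (s + t) := by ring
        rw [hst, mul_one] at hexp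
        linarith
      · have hc := hfU.2 (Set.mem_univ x) (Set.mem_univ z) hs ht hst
        simp only [smul_eq_mul] at hc
        have hlt : s * fU x + t * fU z < s * (a2 + (fU xs - εL)) + t * (b2 + (fU xs - εL)) :=
          combo_lt hs ht hst (by simp only at hx2; linarith) (by simp only at hz2; linarith)
        show fU (s • x + t • z) - fU xs + εL < (s • ((a1, a2) : ℝ × ℝ) + t • (b1, b2)).2
        have h5 : (s • ((a1, a2) : ℝ × ℝ) + t • (b1, b2)).2 = s * a2 + t * b2 := by simp
        rw [h5]
        have hexp : s * (a2 + (fU xs - εL)) + t * (b2 + (fU xs - εL)) =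
            s * a2 + t * b2 + (fU xs - εL) * (s + t) := by ring
        rw [hst, mul_one] at hexp
        linarith
    have h0 : (0 : ℝ × ℝ) ∉ C := by
      rintro ⟨x, hxX, hx1, hx2⟩
      simp only [Prod.fst_zero, Prod.snd_zero] at hx1 hx2
      exact hno ⟨x, hxX, by linarith, by linarith⟩
    obtain ⟨f, hf'⟩ := geometric_hahn_banach_open_point hCconv hCopen h0
    rw [map_zero f] at hf'
    set μ1 : ℝ := f (1, 0) with hμ1
    set μ2 : ℝ := f (0, 1) with hμ2
    have hfy : ∀ y : ℝ × ℝ, f y = μ1 * y.1 + μ2 * y.2 := by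
      intro y
      have hrep : y = y.1 • ((1 : ℝ), (0 : ℝ)) + y.2 • ((0 : ℝ), (1 : ℝ)) := by
        ext <;> simp
      rw [hrep, map_add, map_smul, map_smul]
      simp [hμ1, hμ2, mul_comm]
    have hmem : ∀ x ∈ X, ∀ a b : ℝ, 0 < a → 0 < b →
        ((fL x - fL xs + εU + a, fU x - fU xs + εL + b) : ℝ × ℝ) ∈ C :=
      fun x hx a b ha hb => ⟨x, hx, by simp [ha], by simp [hb]⟩
    have hval : ∀ x ∈ X, ∀ a b : ℝ, 0 < a → 0 < b →
        μ1 * (fL x - fL xs + εU + a) + μ2 * (fU x - fU xs + εL + b) < 0 := by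
      intro x hx a b ha hb
      have := hf' _ (hmem x hx a b ha hb)
      rwa [hfy] at this
    -- sign conditions
    have hμ1le : μ1 ≤ 0 := by
      by_contra hcon
      push_neg at hcon
      set K : ℝ := max 1 ((1 + |μ2 * (εL + 1)| + |μ1 * εU|) / μ1) with hK
      have hK1 : (1 : ℝ) ≤ K := le_max_left _ _
      have hK2 : (1 + |μ2 * (εL + 1)| + |μ1 * εU|) / μ1 ≤ K := le_max_right _ _
      have hKμ : 1 + |μ2 * (εL + 1)| + |μ1 * εU| ≤ μ1 * K := by
        rw [div_le_iff₀ hcon] at hK2; linarith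
      have h4 := hval xs hxs K 1 (by linarith) one_pos
      have habs := neg_abs_le (μ2 * (εL + 1))
      have habs2 := neg_abs_le (μ1 * εU)
      have h5 : μ1 * (fL xs - fL xs + εU + K) + μ2 * (fU xs - fU xs + εL + 1) =
          μ1 * εU + μ1 * K + μ2 * (εL + 1) := by ring
      rw [h5] at h4
      linarith
    have hμ2le : μ2 ≤ 0 := by
      by_contra hcon
      push_neg at hcon
      set K : ℝ := max 1 ((1 + |μ1 * (εU + 1)| + |μ2 * εL|) / μ2) with hK
      have hK1 : (1 : ℝ) ≤ K := le_max_left _ _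
      have hK2 : (1 + |μ1 * (εU + 1)| + |μ2 * εL|) / μ2 ≤ K := le_max_right _ _
      have hKμ : 1 + |μ1 * (εU + 1)| + |μ2 * εL| ≤ μ2 * K := by
        rw [div_le_iff₀ hcon] at hK2; linarith
      have h4 := hval xs hxs 1 K one_pos (by linarith)
      have habs := neg_abs_le (μ1 * (εU + 1))
      have habs2 := neg_abs_le (μ2 * εL)
      have h5 : μ1 * (fL xs - fL xs + εU + 1) + μ2 * (fU xs - fU xs + εL + K) =
          μ1 * (εU + 1) + μ2 * εL + μ2 * K := by ring
      rw [h5] at h4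
      linarith
    -- key inequality
    have hkey : ∀ x ∈ X, μ1 * (fL x - fL xs + εU) + μ2 * (fU x - fU xs + εL) ≤ 0 := by
      intro x hx
      set S : ℝ := μ1 * (fL x - fL xs + εU) + μ2 * (fU x - fU xs + εL) with hS
      by_contra hcon
      push_neg at hcon
      set B : ℝ := -(μ1 + μ2) with hB
      have hB0 : 0 ≤ B := by simp [hB]; linarith
      have hε' : 0 < S / (B + 1) := div_pos hcon (by linarith)
      have h4 := hval x hx (S / (B + 1)) (S / (B + 1)) hε' hε'
      have he : (B + 1) * (S / (B + 1)) = S := by field_simp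
      nlinarith
    have hne : μ1 + μ2 < 0 := by
      rcases (add_nonpos hμ1le hμ2le).lt_or_eq with h | h
      · exact h
      · exfalso
        have h4 := hval xs hxs 1 1 one_pos one_pos
        have h1z : μ1 = 0 := by linarith
        have h2z : μ2 = 0 := by linarith
        rw [h1z, h2z] at h4; linarith
    have hsne : μ1 + μ2 ≠ 0 := ne_of_lt hne
    refine ⟨μ1 / (μ1 + μ2), μ2 / (μ1 + μ2), div_nonneg_of_nonpos hμ1le hne.le,
      div_nonneg_of_nonpos hμ2le hne.le,
      by rw [← add_div, div_self hsne], ?_⟩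
    intro x hx
    have hk := hkey x hx
    rw [ge_iff_le, ← sub_nonneg]
    have heq : μ1 / (μ1 + μ2) * fL x + μ2 / (μ1 + μ2) * fU x -
        (μ1 / (μ1 + μ2) * fL xs + μ2 / (μ1 + μ2) * fU xs - μ1 / (μ1 + μ2) * εU -
          μ2 / (μ1 + μ2) * εL) =
        (μ1 * (fL x - fL xs + εU) + μ2 * (fU x - fU xs + εL)) / (μ1 + μ2) := by
      field_simp
      ring
    rw [heq]
    exact div_nonneg_of_nonpos hk hne.le
  · rintro ⟨μL, μU, hμL, hμU, hsum, hineq⟩ ⟨x, hxX, hx1, hx2⟩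
    have h := hineq x hxX
    rcases hμL.eq_or_lt with rfl | hμL'
    · have hμU1 : μU = 1 := by linarith
      rw [hμU1] at h
      simp at h
      linarith
    · have h1s : μL * fL x < μL * (fL xs - εU) := mul_lt_mul_of_pos_left hx1 hμL'
      have h2 : μU * fU x ≤ μU * (fU xs - εL) := mul_le_mul_of_nonneg_left hx2.le hμU
      nlinarith
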